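/- Let Φ be an M×N real matrix satisfying the bounded restricted isometry property of order s with constant δ_s^b, i.e., (1-δ_s^b)‖x‖₂² ≤ ‖Φx‖₂² ≤ (1+δ_s^b)‖x‖₂² for all s-sparse vectors x with ‖x‖_∞ ≤ 1. If x and z are vectors with disjoint supports, |supp(x)| + |supp(z)| ≤ s, ‖x‖_∞ ≤ 1, and ‖z‖_∞ ≤ 1, then |⟨Φx, Φz⟩| ≤ δ_s^b ‖x‖₂ ‖z‖₂. -/

import Mathlib

noncomputable def l2 {n : ℕ} (x : Fin n → ℝ) : ℝ := Real.sqrt (∑ i, (x i) ^ 2)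

lemma l2_sq {n : ℕ} (x : Fin n → ℝ) : (l2 x) ^ 2 = ∑ i, (x i) ^ 2 := by
  unfold l2
  exact Real.sq_sqrt (Finset.sum_nonneg fun i _ => sq_nonneg _)

lemma abs_le_l2 {n : ℕ} (x : Fin n → ℝ) (i : Fin n) : |x i| ≤ l2 x := by
  rw [← Real.sqrt_sq_eq_abs]
  exact Real.sqrt_le_sqrt (Finset.single_le_sum (fun j _ => sq_nonneg (x j)) (Finset.mem_univ i))

/-- If `Φ` satisfies the bounded restricted isometry property (BRIP) of
order `s` with constant `δ`, and `x, z` have disjoint supports with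
`|supp x| + |supp z| ≤ s` and entries bounded by 1, then
`|⟨Φx, Φz⟩| ≤ δ ‖x‖₂ ‖z‖₂`. -/
theorem stmt0 {M N s : ℕ} (Φ : Matrix (Fin M) (Fin N) ℝ) (δ : ℝ)
    (hBRIP : ∀ v : Fin N → ℝ, Set.ncard (Function.support v) ≤ s → (∀ i, |v i| ≤ 1) →
      (1 - δ) * (l2 v) ^ 2 ≤ (l2 (Φ.mulVec v)) ^ 2 ∧
      (l2 (Φ.mulVec v)) ^ 2 ≤ (1 + δ) * (l2 v) ^ 2)
    (x z : Fin N → ℝ)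
    (hdisj : Disjoint (Function.support x) (Function.support z))
    (hcard : Set.ncard (Function.support x) + Set.ncard (Function.support z) ≤ s)
    (hx : ∀ i, |x i| ≤ 1) (hz : ∀ i, |z i| ≤ 1) :
    |∑ i, Φ.mulVec x i * Φ.mulVec z i| ≤ δ * l2 x * l2 z := by
  set a := l2 x with ha
  set b := l2 z with hb
  have ha0 : 0 ≤ a := Real.sqrt_nonneg _
  have hb0 : 0 ≤ b := Real.sqrt_nonneg _
  -- zero cases
  by_cases hax : a = 0
  · have hx0 : x = 0 := by
      funext i
      have h1 : |x i| ≤ a := abs_le_l2 x i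
      rw [hax] at h1
      simpa using le_antisymm h1 (abs_nonneg _)
    simp [hx0, Matrix.mulVec_zero, hax]
  by_cases hbz : b = 0
  · have hz0 : z = 0 := by
      funext i
      have h1 : |z i| ≤ b := abs_le_l2 z i
      rw [hbz] at h1
      simpa using le_antisymm h1 (abs_nonneg _)
    simp [hz0, Matrix.mulVec_zero, hbz]
  have ha' : 0 < a := lt_of_le_of_ne ha0 (Ne.symm hax)
  have hb' : 0 < b := lt_of_le_of_ne hb0 (Ne.symm hbz)
  -- basic facts
  have hxx : ∑ i, (x i) ^ 2 = a ^ 2 := (l2_sq x).symm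
  have hzz : ∑ i, (z i) ^ 2 = b ^ 2 := (l2_sq z).symm
  have hxz : ∑ i, x i * z i = 0 := by
    apply Finset.sum_eq_zero
    intro i _
    by_cases hxi : x i = 0
    · simp [hxi]
    · have : i ∈ Function.support x := hxi
      have hzi : z i = 0 := by
        by_contra hzi
        exact (Set.disjoint_left.mp hdisj this) hzi
      simp [hzi]
  set u : Fin N → ℝ := a⁻¹ • x + b⁻¹ • z with hu
  set v : Fin N → ℝ := a⁻¹ • x - b⁻¹ • z with hv
  -- support bounds
  have hsupcard : ∀ w : Fin N → ℝ,
      Function.support w ⊆ Function.support x ∪ Function.support z →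
      Set.ncard (Function.support w) ≤ s := by
    intro w hsub
    calc Set.ncard (Function.support w)
        ≤ Set.ncard (Function.support x ∪ Function.support z) :=
          Set.ncard_le_ncard hsub (Set.toFinite _)
      _ ≤ Set.ncard (Function.support x) + Set.ncard (Function.support z) :=
          Set.ncard_union_le _ _
      _ ≤ s := hcard
  have hsupu : Set.ncard (Function.support u) ≤ s := by
    apply hsupcard
    intro i hi
    by_contra hne
    simp only [Set.mem_union, Function.mem_support, not_or, not_not] at hne
    apply hi
    simp [hu, hne.1, hne.2]
  have hsupv : Set.ncard (Function.support v) ≤ s := by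
    apply hsupcard
    intro i hi
    by_contra hne
    simp only [Set.mem_union, Function.mem_support, not_or, not_not] at hne
    apply hi
    simp [hv, hne.1, hne.2]
  -- entry bounds
  have hentry : ∀ i, x i = 0 ∨ z i = 0 := by
    intro i
    by_cases hxi : x i = 0
    · exact Or.inl hxi
    · right
      by_contra hzi
      exact (Set.disjoint_left.mp hdisj hxi) hzi
  have hxa : ∀ i, |a⁻¹ * x i| ≤ 1 := by
    intro i
    rw [abs_mul, abs_inv, abs_of_pos ha']
    rw [inv_mul_le_iff₀ ha', mul_one]
    exact abs_le_l2 x i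
  have hzb : ∀ i, |b⁻¹ * z i| ≤ 1 := by
    intro i
    rw [abs_mul, abs_inv, abs_of_pos hb']
    rw [inv_mul_le_iff₀ hb', mul_one]
    exact abs_le_l2 z i
  have hubd : ∀ i, |u i| ≤ 1 := by
    intro i
    rcases hentry i with h | h
    · simpa [hu, h] using hzb i
    · simpa [hu, h] using hxa i
  have hvbd : ∀ i, |v i| ≤ 1 := by
    intro i
    rcases hentry i with h | h
    · simpa [hv, h, abs_neg] using hzb i
    · simpa [hv, h] using hxa i
  -- norms of u and v
  have hul2 : (l2 u) ^ 2 = 2 := by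
    rw [l2_sq]
    have : ∀ i, u i ^ 2 = a⁻¹ ^ 2 * x i ^ 2 + (2 * a⁻¹ * b⁻¹) * (x i * z i) + b⁻¹ ^ 2 * z i ^ 2 := by
      intro i; simp only [hu, Pi.add_apply, Pi.smul_apply, smul_eq_mul]; ring
    rw [Finset.sum_congr rfl (fun i _ => this i)]
    rw [Finset.sum_add_distrib, Finset.sum_add_distrib, ← Finset.mul_sum, ← Finset.mul_sum,
      ← Finset.mul_sum, hxx, hzz, hxz]
    field_simp
    ring
  have hvl2 : (l2 v) ^ 2 = 2 := by
    rw [l2_sq]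
    have : ∀ i, v i ^ 2 = a⁻¹ ^ 2 * x i ^ 2 - (2 * a⁻¹ * b⁻¹) * (x i * z i) + b⁻¹ ^ 2 * z i ^ 2 := by
      intro i; simp only [hv, Pi.sub_apply, Pi.smul_apply, smul_eq_mul]; ring
    rw [Finset.sum_congr rfl (fun i _ => this i)]
    rw [Finset.sum_add_distrib, Finset.sum_sub_distrib, ← Finset.mul_sum, ← Finset.mul_sum,
      ← Finset.mul_sum, hxx, hzz, hxz]
    field_simp
    ring
  -- BRIP applied
  obtain ⟨hu1, hu2⟩ := hBRIP u hsupu hubd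
  obtain ⟨hv1, hv2⟩ := hBRIP v hsupv hvbd
  rw [hul2] at hu1 hu2
  rw [hvl2] at hv1 hv2
  rw [l2_sq] at hu1 hu2 hv1 hv2
  -- polarization
  set S := ∑ i, Φ.mulVec x i * Φ.mulVec z i with hS
  have hpol : ∑ i, (Φ.mulVec u i) ^ 2 - ∑ i, (Φ.mulVec v i) ^ 2 = 4 * a⁻¹ * b⁻¹ * S := by
    have hmu : ∀ i, Φ.mulVec u i = a⁻¹ * Φ.mulVec x i + b⁻¹ * Φ.mulVec z i := by
      intro i
      simp [hu, Matrix.mulVec_add, Matrix.mulVec_smul]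
    have hmv : ∀ i, Φ.mulVec v i = a⁻¹ * Φ.mulVec x i - b⁻¹ * Φ.mulVec z i := by
      intro i
      simp [hv, Matrix.mulVec_sub, Matrix.mulVec_smul]
    rw [← Finset.sum_sub_distrib]
    have : ∀ i, (Φ.mulVec u i) ^ 2 - (Φ.mulVec v i) ^ 2
        = (4 * a⁻¹ * b⁻¹) * (Φ.mulVec x i * Φ.mulVec z i) := by
      intro i; rw [hmu i, hmv i]; ring
    rw [Finset.sum_congr rfl (fun i _ => this i), ← Finset.mul_sum, hS]
  have hub : 4 * a⁻¹ * b⁻¹ * S ≤ 4 * δ := by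
    have := sub_le_sub hu2 hv1
    rw [hpol] at this
    linarith
  have hlb : -(4 * δ) ≤ 4 * a⁻¹ * b⁻¹ * S := by
    have := sub_le_sub hu1 hv2
    rw [hpol] at this
    linarith
  rw [abs_le]
  constructor
  · have h1 : -(δ * a * b) = (a * b) * (-(4*δ) / 4) := by ring
    rw [h1]
    have h2 : S = (a * b) * ((4 * a⁻¹ * b⁻¹ * S) / 4) := by
      field_simp
    rw [h2]
    apply mul_le_mul_of_nonneg_left _ (by positivity)
    linarith
  · have h2 : S = (a * b) * ((4 * a⁻¹ * b⁻¹ * S) / 4) := by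
      field_simp
    rw [h2]
    have h1 : δ * a * b = (a * b) * ((4*δ) / 4) := by ring
    rw [h1]
    apply mul_le_mul_of_nonneg_left _ (by positivity)
    linarith
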